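/- Let $w : \mathbb{R} \to \mathbb{C}$ be smooth with support in $[\alpha,\beta]$ satisfying $|w^{(j)}(t)| \le C_j X U^{-j}$ for all $j \ge 0$, and let $\Phi : [\alpha,\beta] \to \mathbb{R}$ be smooth with $|\Phi'(t)| \ge R > 0$ and $|\Phi^{(j)}(t)| \le C_j' Y Q^{-j}$ for $j \ge 2$, where $Y \ge 1$ and $X, Q, U, R > 0$. Then for every $A \ge 0$ there is a constant $C(A, (C_j), (C_j'))$ with $\left|\int_{\mathbb{R}} w(t)e^{i\Phi(t)}\,dt\right| \le C(\beta-\alpha)\,X\,\left[(QR/\sqrt{Y})^{-A} + (RU)^{-A}\right]$. -/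

import Mathlib

open MeasureTheory Real Set

namespace BKYproof

lemma iteratedDeriv_ofReal (f : ℝ → ℝ) (hf : ContDiff ℝ (⊤:ℕ∞) f) (n : ℕ) :
    iteratedDeriv n (fun s => ((f s : ℝ) : ℂ)) = fun t => ((iteratedDeriv n f t : ℝ) : ℂ) := by
  induction n generalizing f with
  | zero => simp
  | succ n ih =>
    rw [iteratedDeriv_succ', iteratedDeriv_succ']
    have h1 : (deriv fun s => ((f s :ℝ):ℂ)) = fun s => ((deriv f s : ℝ):ℂ) := by
      funext s
      exact (((hf.differentiable (by simp)) s).hasDerivAt.ofReal_comp).deriv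
    rw [h1, ih _ (contDiff_infty_iff_deriv.mp hf).2]

lemma iteratedDeriv_shift (f : ℝ → ℝ) (i m : ℕ) :
    iteratedDeriv i (iteratedDeriv m f) = iteratedDeriv (i + m) f := by
  simp [iteratedDeriv_eq_iterate, ← Function.iterate_add_apply]

lemma gbound (E : ℕ → ℝ) (hE : ∀ m, 0 ≤ E m) (k : ℕ) :
    ∃ c : ℝ, 0 ≤ c ∧ ∀ (α β R V : ℝ) (Φ : ℝ → ℝ), 0 < R → 0 < V → 1 ≤ R * V →
      ContDiff ℝ (⊤:ℕ∞) Φ → (∀ t ∈ Icc α β, R ≤ |deriv Φ t|) →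
      (∀ m, 2 ≤ m → ∀ t ∈ Icc α β, |iteratedDeriv m Φ t| ≤ E m / V ^ m) →
      ∀ t ∈ Icc α β, ‖iteratedDeriv k (fun s => (((deriv Φ s : ℝ) : ℂ))⁻¹) t‖ ≤ c / R / V ^ k := by
  induction k using Nat.strong_induction_on with
  | _ k IH =>
  match k with
  | 0 =>
    refine ⟨1, zero_le_one, ?_⟩
    intro α β R V Φ hR hV hRV hΦ hΦR hΦm t ht
    simp only [iteratedDeriv_zero, pow_zero, div_one]
    rw [norm_inv, Complex.norm_real, Real.norm_eq_abs, one_div]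
    exact inv_anti₀ hR (hΦR t ht)
  | (m+1) =>
    have hex : ∀ j : ℕ, j < m + 1 → ∃ c : ℝ, 0 ≤ c ∧ ∀ (α β R V : ℝ) (Φ : ℝ → ℝ),
        0 < R → 0 < V → 1 ≤ R * V →
        ContDiff ℝ (⊤:ℕ∞) Φ → (∀ t ∈ Icc α β, R ≤ |deriv Φ t|) →
        (∀ m, 2 ≤ m → ∀ t ∈ Icc α β, |iteratedDeriv m Φ t| ≤ E m / V ^ m) →
        ∀ t ∈ Icc α β, ‖iteratedDeriv j (fun s => (((deriv Φ s : ℝ) : ℂ))⁻¹) t‖ ≤ c / R / V ^ j :=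
      fun j hj => IH j hj
    choose c0 hc00 hc0 using hex
    set c : ℕ → ℝ := fun j => if h : j < m + 1 then c0 j h else 0 with hcdef
    have hcnn : ∀ j, 0 ≤ c j := by
      intro j; by_cases h : j < m + 1
      · simp only [hcdef, dif_pos h]; exact hc00 j h
      · simp only [hcdef, dif_neg h, le_refl]
    set S : ℕ → ℝ := fun i => ∑ j ∈ Finset.range (m - i + 1),
      ((m - i).choose j : ℝ) * c j * c (m - i - j) with hSdef
    have hSnn : ∀ i, 0 ≤ S i := by
      intro i
      apply Finset.sum_nonneg
      intro j hj
      have := hcnn j; have := hcnn (m - i - j)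
      positivity
    refine ⟨∑ i ∈ Finset.range (m + 1), (m.choose i : ℝ) * E (i + 2) * S i, ?_, ?_⟩
    · apply Finset.sum_nonneg
      intro i hi
      have := hE (i + 2); have := hSnn i
      positivity
    intro α β R V Φ hR hV hRV hΦ hΦR hΦm t ht
    -- setup
    have hΦd : ContDiff ℝ (⊤:ℕ∞) (deriv Φ) := (contDiff_infty_iff_deriv.mp hΦ).2
    set U : Set ℝ := {s | R / 2 < |deriv Φ s|} with hUdef
    have hUopen : IsOpen U := isOpen_lt continuous_const (continuous_abs.comp hΦd.continuous)
    have hIccU : Icc α β ⊆ U := fun s hs => lt_of_lt_of_le (by linarith) (hΦR s hs)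
    have htU : t ∈ U := hIccU ht
    have hne : ∀ s ∈ U, deriv Φ s ≠ 0 := by
      intro s hs h
      have : R / 2 < |deriv Φ s| := hs
      rw [h, abs_zero] at this; linarith
    set G : ℝ → ℂ := fun s => (((deriv Φ s : ℝ) : ℂ))⁻¹ with hGdef
    have hΦdC : ContDiff ℝ (⊤:ℕ∞) (fun s => ((deriv Φ s : ℝ) : ℂ)) :=
      Complex.ofRealCLM.contDiff.comp hΦd
    have hGsm : ContDiffOn ℝ (⊤:ℕ∞) G U :=
      hΦdC.contDiffOn.inv (fun s hs => Complex.ofReal_ne_zero.mpr (hne s hs))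
    set Φ2 : ℝ → ℝ := iteratedDeriv 2 Φ with hΦ2def
    have hΦ2sm : ContDiff ℝ (⊤:ℕ∞) Φ2 := by
      rw [hΦ2def, iteratedDeriv_eq_iterate]
      exact ContDiff.iterate_deriv 2 hΦ
    set f1 : ℝ → ℂ := fun s => (((-(Φ2 s) : ℝ)) : ℂ) with hf1def
    set g1 : ℝ → ℂ := fun s => G s * G s with hg1def
    have hf1sm : ContDiff ℝ (⊤:ℕ∞) f1 := Complex.ofRealCLM.contDiff.comp hΦ2sm.neg
    have hg1sm : ContDiffOn ℝ (⊤:ℕ∞) g1 U := hGsm.mul hGsm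
    have hUD : UniqueDiffOn ℝ U := hUopen.uniqueDiffOn
    -- derivative identity
    have hderivG : ∀ s ∈ U, deriv G s = f1 s * g1 s := by
      intro s hs
      have h1 : HasDerivAt (deriv Φ) (Φ2 s) s := by
        have h := (hΦd.differentiable (by simp) s).hasDerivAt
        have h2 : deriv (deriv Φ) s = Φ2 s := by
          rw [hΦ2def, iteratedDeriv_succ', iteratedDeriv_one]
        rwa [h2] at h
      have h2 : HasDerivAt (fun s => ((deriv Φ s : ℝ) : ℂ)) ((Φ2 s : ℂ)) s := h1.ofReal_comp
      have hz : ((deriv Φ s : ℝ) : ℂ) ≠ 0 := Complex.ofReal_ne_zero.mpr (hne s hs)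
      have hinvC := ((hasDerivAt_inv hz).hasFDerivAt.restrictScalars ℝ)
      have h5 := hinvC.comp_hasDerivAt s h2
      have h4 : deriv G s = -(Φ2 s : ℂ) / ((deriv Φ s : ℝ) : ℂ) ^ 2 := by
        have h6 := h5.deriv
        simp only [Function.comp_def, ContinuousLinearMap.coe_restrictScalars',
          ContinuousLinearMap.smulRight_apply, ContinuousLinearMap.one_apply,
          ContinuousLinearMap.toSpanSingleton_apply, smul_eq_mul] at h6
        rw [hGdef, h6]
        field_simp
      rw [h4, hf1def, hg1def, hGdef]
      push_cast
      rw [div_eq_mul_inv, sq, mul_inv]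
    have key : iteratedDeriv (m + 1) G t = iteratedDeriv m (fun s => f1 s * g1 s) t := by
      rw [iteratedDeriv_succ']
      refine Filter.EventuallyEq.iteratedDeriv_eq m ?_
      filter_upwards [hUopen.mem_nhds htU] with s hs
      exact hderivG s hs
    -- G bounds from IH
    have hGb : ∀ j, j ≤ m → ‖iteratedDeriv j G t‖ ≤ c j / R / V ^ j := by
      intro j hj
      have hj' : j < m + 1 := Nat.lt_succ_of_le hj
      have := hc0 j hj' α β R V Φ hR hV hRV hΦ hΦR hΦm t ht
      simp only [hcdef, dif_pos hj']; exact this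
    have hwithinG : ∀ j, ‖iteratedFDerivWithin ℝ j G U t‖ = ‖iteratedDeriv j G t‖ := by
      intro j
      rw [iteratedFDerivWithin_of_isOpen j hUopen htU, norm_iteratedFDeriv_eq_norm_iteratedDeriv]
    -- f1 bounds
    have hf1b : ∀ i : ℕ, ‖iteratedDeriv i f1 t‖ ≤ E (i + 2) / V ^ (i + 2) := by
      intro i
      rw [hf1def, iteratedDeriv_ofReal _ hΦ2sm.neg i, Complex.norm_real, Real.norm_eq_abs]
      have h : iteratedDeriv i (fun s => -(Φ2 s)) t = -(iteratedDeriv (i + 2) Φ t) := by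
        rw [iteratedDeriv_fun_neg, hΦ2def,
          show iteratedDeriv i (iteratedDeriv 2 Φ) t = iteratedDeriv (i + 2) Φ t from
            congrFun (iteratedDeriv_shift Φ i 2) t]
      rw [h, abs_neg]
      exact hΦm (i + 2) (by omega) t ht
    -- g1 bounds within
    have hg1b : ∀ p, p ≤ m → ‖iteratedFDerivWithin ℝ p g1 U t‖ ≤
        (∑ j ∈ Finset.range (p + 1), (p.choose j : ℝ) * c j * c (p - j)) / (R ^ 2 * V ^ p) := by
      intro p hp
      have hle := norm_iteratedFDerivWithin_mul_le (𝕜 := ℝ) (f := G) (g := G)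
        hGsm hGsm hUD htU (n := p) (by exact_mod_cast le_top)
      refine hle.trans ?_
      rw [Finset.sum_div]
      apply Finset.sum_le_sum
      intro j hj
      rw [Finset.mem_range, Nat.lt_succ_iff] at hj
      rw [hwithinG j, hwithinG (p - j)]
      have h1 := hGb j (hj.trans hp)
      have h2 := hGb (p - j) ((Nat.sub_le p j).trans hp)
      have hvp : V ^ p = V ^ j * V ^ (p - j) := by
        rw [← pow_add]; congr 1; omega
      have heq : (p.choose j : ℝ) * (c j / R / V ^ j) * (c (p - j) / R / V ^ (p - j))
          = (p.choose j : ℝ) * c j * c (p - j) / (R ^ 2 * V ^ p) := by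
        rw [hvp]; ring
      rw [← heq]
      have hcj := hcnn j; have hcpj := hcnn (p - j)
      gcongr
    -- main chain
    have hmain : ‖iteratedDeriv m (fun s => f1 s * g1 s) t‖ ≤
        (∑ i ∈ Finset.range (m + 1), (m.choose i : ℝ) * E (i + 2) * S i) / (R ^ 2 * V ^ (m + 2)) := by
      have h0 : ‖iteratedDeriv m (fun s => f1 s * g1 s) t‖
          = ‖iteratedFDerivWithin ℝ m (fun s => f1 s * g1 s) U t‖ := by
        rw [iteratedFDerivWithin_of_isOpen m hUopen htU,
          norm_iteratedFDeriv_eq_norm_iteratedDeriv]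
      rw [h0]
      have hle := norm_iteratedFDerivWithin_mul_le (𝕜 := ℝ) (f := f1) (g := g1)
        hf1sm.contDiffOn hg1sm hUD htU (n := m) (by exact_mod_cast le_top)
      refine hle.trans ?_
      rw [Finset.sum_div]
      apply Finset.sum_le_sum
      intro i hi
      rw [Finset.mem_range, Nat.lt_succ_iff] at hi
      have hwf1 : ‖iteratedFDerivWithin ℝ i f1 U t‖ = ‖iteratedDeriv i f1 t‖ := by
        rw [iteratedFDerivWithin_of_isOpen i hUopen htU, norm_iteratedFDeriv_eq_norm_iteratedDeriv]
      rw [hwf1]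
      have h1 := hf1b i
      have h2 := hg1b (m - i) (Nat.sub_le m i)
      have hvp : V ^ (m + 2) = V ^ (i + 2) * V ^ (m - i) := by
        rw [← pow_add]; congr 1; omega
      have heq : (m.choose i : ℝ) * (E (i + 2) / V ^ (i + 2)) * (S i / (R ^ 2 * V ^ (m - i)))
          = (m.choose i : ℝ) * E (i + 2) * S i / (R ^ 2 * V ^ (m + 2)) := by
        rw [hvp, hSdef]; ring
      rw [← heq]
      have hEi := hE (i + 2); have hSi := hSnn i
      have hSx : S i = ∑ j ∈ Finset.range (m - i + 1),
        ((m - i).choose j : ℝ) * c j * c (m - i - j) := rfl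
      rw [← hSx] at h2
      gcongr
    rw [key]
    refine hmain.trans ?_
    rw [div_div]
    have hd : R * V ^ (m + 1) ≤ R ^ 2 * V ^ (m + 2) := by
      have h1 : R ^ 2 * V ^ (m + 2) = (R * V ^ (m + 1)) * (R * V) := by ring
      rw [h1]
      have h2 : 0 < R * V ^ (m + 1) := by positivity
      nlinarith
    apply div_le_div_of_nonneg_left ?_ (by positivity) hd
    apply Finset.sum_nonneg
    intro i hi
    have := hE (i + 2); have := hSnn i
    positivity

lemma iteratedDeriv_zero_off {w : ℝ → ℂ} {s : Set ℝ} (hs : IsOpen s)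
    (h0 : ∀ t ∈ s, w t = 0) {j : ℕ} {t : ℝ} (ht : t ∈ s) : iteratedDeriv j w t = 0 := by
  have h : w =ᶠ[nhds t] (fun _ => (0:ℂ)) :=
    Filter.eventuallyEq_of_mem (hs.mem_nhds ht) h0
  rw [h.iteratedDeriv_eq]
  rw [iteratedDeriv_eq_iteratedFDeriv]
  simp [iteratedFDeriv_zero_fun]

lemma integral_eq_interval {α β : ℝ} (hab : α ≤ β) (f : ℝ → ℂ)
    (h0 : ∀ t, t ∉ Icc α β → f t = 0) :
    ∫ t, f t = ∫ t in α..β, f t := by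
  rw [intervalIntegral.integral_of_le hab, ← MeasureTheory.integral_Icc_eq_integral_Ioc,
    ← MeasureTheory.integral_indicator measurableSet_Icc]
  congr 1
  funext t
  by_cases ht : t ∈ Icc α β
  · simp [Set.indicator_of_mem ht]
  · simp [Set.indicator_of_notMem ht, h0 t ht]

lemma triv_bound {α β : ℝ} (hab : α ≤ β) {f : ℝ → ℂ}
    (h0 : ∀ t, t ∉ Icc α β → f t = 0) {B : ℝ} (hB : ∀ t, ‖f t‖ ≤ B) :
    ‖∫ t, f t‖ ≤ (β - α) * B := by
  rw [integral_eq_interval hab f h0]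
  have h := intervalIntegral.norm_integral_le_of_norm_le_const
    (f := f) (a := α) (b := β) (C := B) (fun x _ => hB x)
  rwa [abs_of_nonneg (by linarith), mul_comm] at h

lemma zero_at_endpoints {w : ℝ → ℂ} (hw : Continuous w) {α β : ℝ}
    (hsupp : ∀ t, w t ≠ 0 → t ∈ Icc α β) : w α = 0 ∧ w β = 0 := by
  constructor
  · have h1 : Filter.Tendsto w (nhdsWithin α (Iio α)) (nhds (w α)) :=
      (hw.continuousAt).continuousWithinAt.tendsto
    have h2 : w =ᶠ[nhdsWithin α (Iio α)] (fun _ => 0) := by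
      filter_upwards [self_mem_nhdsWithin] with t ht
      by_contra h
      exact absurd ((hsupp t h).1) (not_le.mpr ht)
    have h3 : Filter.Tendsto w (nhdsWithin α (Iio α)) (nhds 0) := by
      rw [Filter.tendsto_congr' h2]; exact tendsto_const_nhds
    exact tendsto_nhds_unique h1 h3
  · have h1 : Filter.Tendsto w (nhdsWithin β (Ioi β)) (nhds (w β)) :=
      (hw.continuousAt).continuousWithinAt.tendsto
    have h2 : w =ᶠ[nhdsWithin β (Ioi β)] (fun _ => 0) := by
      filter_upwards [self_mem_nhdsWithin] with t ht
      by_contra h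
      exact absurd ((hsupp t h).2) (not_le.mpr ht)
    have h3 : Filter.Tendsto w (nhdsWithin β (Ioi β)) (nhds 0) := by
      rw [Filter.tendsto_congr' h2]; exact tendsto_const_nhds
    exact tendsto_nhds_unique h1 h3

lemma core (E : ℕ → ℝ) (hE : ∀ m, 0 ≤ E m) (n : ℕ) :
    ∀ (D : ℕ → ℝ), (∀ j, 0 ≤ D j) →
    ∃ C : ℝ, 0 ≤ C ∧ ∀ (α β M V R : ℝ) (w : ℝ → ℂ) (Φ : ℝ → ℝ),
      0 < M → 0 < V → 0 < R → 1 ≤ R * V → α ≤ β →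
      ContDiff ℝ (⊤:ℕ∞) w → (∀ t, w t ≠ 0 → t ∈ Icc α β) →
      (∀ j t, ‖iteratedDeriv j w t‖ ≤ D j * M / V ^ j) →
      ContDiff ℝ (⊤:ℕ∞) Φ → (∀ t ∈ Icc α β, R ≤ |deriv Φ t|) →
      (∀ m, 2 ≤ m → ∀ t ∈ Icc α β, |iteratedDeriv m Φ t| ≤ E m / V ^ m) →
      ‖∫ t, w t * Complex.exp (Complex.I * (Φ t : ℂ))‖ ≤ C * (β - α) * M / (R * V) ^ n := by
  induction n with
  | zero =>
    intro D hD
    refine ⟨D 0, hD 0, ?_⟩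
    intro α β M V R w Φ hM hV hR hRV hab hw hsupp hwb hΦ hΦR hΦm
    have hb : ∀ t, ‖w t * Complex.exp (Complex.I * (Φ t:ℂ))‖ ≤ D 0 * M := by
      intro t
      rw [norm_mul]
      have h1 : ‖Complex.exp (Complex.I * (Φ t:ℂ))‖ = 1 := by
        rw [Complex.norm_exp]
        simp
      rw [h1, mul_one]
      simpa using hwb 0 t
    have h0 : ∀ t, t ∉ Icc α β → w t * Complex.exp (Complex.I * (Φ t:ℂ)) = 0 := by
      intro t ht
      have hwt : w t = 0 := by by_contra h; exact ht (hsupp t h)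
      rw [hwt, zero_mul]
    calc ‖∫ t, w t * Complex.exp (Complex.I * (Φ t:ℂ))‖ ≤ (β - α) * (D 0 * M) :=
          triv_bound hab h0 hb
      _ = D 0 * (β - α) * M / (R*V)^0 := by ring
  | succ n IH =>
    intro D hD
    choose c hc0 hc using gbound E hE
    set D₁ : ℕ → ℝ := fun j => ∑ k ∈ Finset.range (j + 2),
      ((j+1).choose k : ℝ) * D k * c (j + 1 - k) with hD₁def
    have hD₁ : ∀ j, 0 ≤ D₁ j := by
      intro j; apply Finset.sum_nonneg; intro k hk
      have := hD k; have := hc0 (j+1-k); positivity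
    obtain ⟨C₁, hC₁0, hC₁⟩ := IH D₁ hD₁
    refine ⟨C₁, hC₁0, ?_⟩
    intro α β M V R w Φ hM hV hR hRV hab hw hsupp hwb hΦ hΦR hΦm
    have hΦd : ContDiff ℝ (⊤:ℕ∞) (deriv Φ) := (contDiff_infty_iff_deriv.mp hΦ).2
    set U : Set ℝ := {s | R / 2 < |deriv Φ s|} with hUdef
    have hUopen : IsOpen U := isOpen_lt continuous_const (continuous_abs.comp hΦd.continuous)
    have hIccU : Icc α β ⊆ U := fun s hs => lt_of_lt_of_le (by linarith) (hΦR s hs)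
    have hne : ∀ s ∈ U, deriv Φ s ≠ 0 := by
      intro s hs h
      have h2 : R / 2 < |deriv Φ s| := hs
      rw [h, abs_zero] at h2; linarith
    set G : ℝ → ℂ := fun s => (((deriv Φ s : ℝ) : ℂ))⁻¹ with hGdef
    have hΦdC : ContDiff ℝ (⊤:ℕ∞) (fun s => ((deriv Φ s : ℝ) : ℂ)) :=
      Complex.ofRealCLM.contDiff.comp hΦd
    have hGsm : ContDiffOn ℝ (⊤:ℕ∞) G U :=
      hΦdC.contDiffOn.inv (fun s hs => Complex.ofReal_ne_zero.mpr (hne s hs))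
    have hUD : UniqueDiffOn ℝ U := hUopen.uniqueDiffOn
    set u : ℝ → ℂ := fun s => w s * G s with hudef
    have hcompl : ∀ s, s ∉ Icc α β → w s = 0 := by
      intro s hs; by_contra h; exact hs (hsupp s h)
    have hu0 : ∀ s, s ∉ Icc α β → u s = 0 := by
      intro s hs; rw [hudef]; simp only; rw [hcompl s hs, zero_mul]
    have hopenC : IsOpen (Icc α β)ᶜ := isOpen_compl_iff.mpr isClosed_Icc
    have huC : ContDiff ℝ (⊤:ℕ∞) u := by
      rw [contDiff_iff_contDiffAt]
      intro s
      by_cases hsU : s ∈ U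
      · exact (hw.contDiffAt).mul (hGsm.contDiffAt (hUopen.mem_nhds hsU))
      · have hsI : s ∈ (Icc α β)ᶜ := fun h => hsU (hIccU h)
        have hev : u =ᶠ[nhds s] (fun _ => 0) :=
          Filter.eventuallyEq_of_mem (hopenC.mem_nhds hsI) (fun x hx => hu0 x hx)
        exact (contDiffAt_const (c := (0:ℂ))).congr_of_eventuallyEq hev
    set w₁ : ℝ → ℂ := deriv u with hw₁def
    have hw₁C : ContDiff ℝ (⊤:ℕ∞) w₁ := (contDiff_infty_iff_deriv.mp huC).2
    have hw₁zero : ∀ t, t ∉ Icc α β → w₁ t = 0 := by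
      intro t ht
      have hev : u =ᶠ[nhds t] (fun _ => 0) :=
        Filter.eventuallyEq_of_mem (hopenC.mem_nhds ht) (fun x hx => hu0 x hx)
      rw [hw₁def]
      rw [hev.deriv_eq, deriv_const]
    have hw₁supp : ∀ t, w₁ t ≠ 0 → t ∈ Icc α β := by
      intro t h; by_contra hn; exact h (hw₁zero t hn)
    have hIter : ∀ j (t : ℝ), iteratedDeriv j w₁ t = iteratedDeriv (j+1) u t := by
      intro j t; rw [iteratedDeriv_succ', hw₁def]
    have hw₁b : ∀ j (t : ℝ), ‖iteratedDeriv j w₁ t‖ ≤ D₁ j * (M / (R*V)) / V ^ j := by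
      intro j t
      rw [hIter j t]
      by_cases ht : t ∈ Icc α β
      · have htU : t ∈ U := hIccU ht
        have h0 : ‖iteratedDeriv (j+1) u t‖
            = ‖iteratedFDerivWithin ℝ (j+1) (fun y => w y * G y) U t‖ := by
          rw [iteratedFDerivWithin_of_isOpen (j+1) hUopen htU,
            norm_iteratedFDeriv_eq_norm_iteratedDeriv, hudef]
        rw [h0]
        have hle := norm_iteratedFDerivWithin_mul_le (𝕜 := ℝ) (f := w) (g := G)
          hw.contDiffOn hGsm hUD htU (n := j+1) (by exact_mod_cast le_top)
        refine hle.trans ?_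
        have hgoal : D₁ j * (M / (R*V)) / V ^ j = ∑ k ∈ Finset.range (j + 2),
            ((j+1).choose k : ℝ) * D k * c (j + 1 - k) * M / (R * V ^ (j+1)) := by
          rw [hD₁def]
          simp only
          rw [Finset.sum_mul, Finset.sum_div]
          apply Finset.sum_congr rfl
          intro k hk
          rw [pow_succ]
          ring
        rw [hgoal]
        apply Finset.sum_le_sum
        intro k hk
        rw [Finset.mem_range, Nat.lt_succ_iff] at hk
        have hww : ‖iteratedFDerivWithin ℝ k w U t‖ = ‖iteratedDeriv k w t‖ := by
          rw [iteratedFDerivWithin_of_isOpen k hUopen htU,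
            norm_iteratedFDeriv_eq_norm_iteratedDeriv]
        have hGG : ‖iteratedFDerivWithin ℝ (j+1-k) G U t‖ = ‖iteratedDeriv (j+1-k) G t‖ := by
          rw [iteratedFDerivWithin_of_isOpen (j+1-k) hUopen htU,
            norm_iteratedFDeriv_eq_norm_iteratedDeriv]
        rw [hww, hGG]
        have h1 := hwb k t
        have h2 := hc (j+1-k) α β R V Φ hR hV hRV hΦ hΦR hΦm t ht
        rw [← hGdef] at h2
        have hvp : V ^ (j+1) = V ^ k * V ^ (j+1-k) := by
          rw [← pow_add]; congr 1; omega
        have heq : ((j+1).choose k : ℝ) * (D k * M / V ^ k) * (c (j+1-k) / R / V ^ (j+1-k))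
            = ((j+1).choose k : ℝ) * D k * c (j+1-k) * M / (R * V ^ (j+1)) := by
          rw [hvp]; ring
        rw [← heq]
        have hDk := hD k; have hck := hc0 (j+1-k)
        gcongr
      · have hzero : iteratedDeriv (j+1) u t = 0 :=
          iteratedDeriv_zero_off hopenC (fun x hx => hu0 x hx) ht
        rw [hzero, norm_zero]
        have := hD₁ j
        positivity
    -- integration by parts
    set v : ℝ → ℂ := fun s => Complex.exp (Complex.I * (Φ s : ℂ)) with hvdef
    have hΦdiff : Differentiable ℝ Φ := hΦ.differentiable (by simp)
    have hvd : ∀ s : ℝ, HasDerivAt v (Complex.I * ((deriv Φ s : ℝ):ℂ) * v s) s := by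
      intro s
      have h2 : HasDerivAt Φ (deriv Φ s) s := (hΦdiff s).hasDerivAt
      have h1 : HasDerivAt (fun y : ℝ => Complex.I * ((Φ y : ℝ):ℂ))
          (Complex.I * ((deriv Φ s : ℝ):ℂ)) s := by
        simpa [mul_comm] using (h2.ofReal_comp).const_mul Complex.I
      have h3 := h1.cexp
      simpa [hvdef, mul_comm, mul_assoc, mul_left_comm] using h3
    have hud : ∀ s : ℝ, HasDerivAt u (w₁ s) s := by
      intro s
      have := (huC.differentiable (by simp) s).hasDerivAt
      rwa [hw₁def]
    have hvcont : Continuous v := by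
      rw [hvdef]
      exact Complex.continuous_exp.comp (continuous_const.mul
        (Complex.continuous_ofReal.comp hΦ.continuous))
    have hv'cont : Continuous (fun s => Complex.I * ((deriv Φ s : ℝ):ℂ) * v s) :=
      ((continuous_const.mul (Complex.continuous_ofReal.comp hΦd.continuous)).mul hvcont)
    have hw₁cont : Continuous w₁ := hw₁C.continuous
    have hibp := intervalIntegral.integral_mul_deriv_eq_deriv_mul
      (u := u) (v := v) (u' := w₁) (v' := fun s => Complex.I * ((deriv Φ s : ℝ):ℂ) * v s)
      (fun x _ => hud x) (fun x _ => hvd x)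
      (hw₁cont.intervalIntegrable α β) (hv'cont.intervalIntegrable α β)
    obtain ⟨hwα, hwβ⟩ := zero_at_endpoints hw.continuous hsupp
    have huα : u α = 0 := by rw [hudef]; simp only; rw [hwα, zero_mul]
    have huβ : u β = 0 := by rw [hudef]; simp only; rw [hwβ, zero_mul]
    have hInt1 : (fun t => w t * v t)
        = fun t => (-Complex.I) * (u t * (Complex.I * ((deriv Φ t : ℝ):ℂ) * v t)) := by
      funext s
      by_cases hs : s ∈ Icc α β
      · have hnz : ((deriv Φ s : ℝ):ℂ) ≠ 0 := Complex.ofReal_ne_zero.mpr (hne s (hIccU hs))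
        rw [hudef, hGdef]
        simp only
        have hre : (-Complex.I) * ((w s * ((deriv Φ s : ℝ):ℂ)⁻¹)
            * (Complex.I * ((deriv Φ s : ℝ):ℂ) * v s))
            = (w s * v s) * (-Complex.I * Complex.I)
              * (((deriv Φ s : ℝ):ℂ)⁻¹ * ((deriv Φ s : ℝ):ℂ)) := by ring
        rw [hre, neg_mul, Complex.I_mul_I, neg_neg, mul_one, inv_mul_cancel₀ hnz, mul_one]
      · rw [hcompl s hs, hu0 s hs]
        simp
    have hfin : ‖∫ t, w t * v t‖ = ‖∫ t, w₁ t * v t‖ := by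
      have hEq : ∫ t, w t * v t
          = (-Complex.I) * ∫ t in α..β, u t * (Complex.I * ((deriv Φ t : ℝ):ℂ) * v t) := by
        rw [hInt1, integral_eq_interval hab _ (fun t ht => by rw [hu0 t ht]; simp),
          intervalIntegral.integral_const_mul]
      have hEq2 : ∫ t in α..β, u t * (Complex.I * ((deriv Φ t : ℝ):ℂ) * v t)
          = - ∫ t in α..β, w₁ t * v t := by
        rw [hibp, huα, huβ]
        simp
      have hEq3 : ∫ t in α..β, w₁ t * v t = ∫ t, w₁ t * v t :=
        (integral_eq_interval hab _ (fun t ht => by rw [hw₁zero t ht, zero_mul])).symm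
      rw [hEq, hEq2, hEq3, mul_neg, norm_neg, norm_mul, norm_neg, Complex.norm_I, one_mul]
    have happ := hC₁ α β (M/(R*V)) V R w₁ Φ (by positivity) hV hR hRV hab hw₁C hw₁supp
      hw₁b hΦ hΦR hΦm
    calc ‖∫ t, w t * Complex.exp (Complex.I * (Φ t : ℂ))‖
        = ‖∫ t, w₁ t * v t‖ := hfin
      _ ≤ C₁ * (β - α) * (M / (R*V)) / (R*V) ^ n := happ
      _ = C₁ * (β - α) * M / (R*V) ^ (n+1) := by rw [pow_succ]; ring

theorem stmt10_aux (Cw CΦ : ℕ → ℝ) (A : ℝ) (hA : 0 ≤ A) :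
    ∃ C : ℝ, ∀ (α β X U R Q Y : ℝ) (w : ℝ → ℂ) (Φ : ℝ → ℝ),
      0 < X → 0 < U → 0 < R → 0 < Q → 1 ≤ Y → α ≤ β →
      ContDiff ℝ (⊤ : ℕ∞) w →
      (∀ t : ℝ, w t ≠ 0 → t ∈ Icc α β) →
      (∀ (j : ℕ) (t : ℝ), ‖iteratedDeriv j w t‖ ≤ Cw j * X * U ^ (-(j : ℤ))) →
      ContDiff ℝ (⊤ : ℕ∞) Φ →
      (∀ t ∈ Icc α β, R ≤ |deriv Φ t|) →
      (∀ j : ℕ, 2 ≤ j → ∀ t ∈ Icc α β, |iteratedDeriv j Φ t| ≤ CΦ j * Y * Q ^ (-(j : ℤ))) →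
      ‖∫ t : ℝ, w t * Complex.exp (Complex.I * (Φ t : ℂ))‖ ≤
        C * (β - α) * X * ((Q * R / Real.sqrt Y) ^ (-A) + (R * U) ^ (-A)) := by
  set n : ℕ := ⌈A⌉₊ with hndef
  set D : ℕ → ℝ := fun j => max (Cw j) 0 with hDdef
  set E : ℕ → ℝ := fun m => max (CΦ m) 0 with hEdef
  have hD : ∀ j, 0 ≤ D j := fun j => le_max_right _ _
  have hE : ∀ m, 0 ≤ E m := fun m => le_max_right _ _
  obtain ⟨C₂, hC₂0, hC₂⟩ := core E hE n D hD
  set m0 : ℝ := max (Cw 0) 0 with hm0def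
  have hm00 : 0 ≤ m0 := le_max_right _ _
  refine ⟨m0 + C₂, ?_⟩
  intro α β X U R Q Y w Φ hX hU hR hQ hY hab hw hsupp hwb hΦ hΦR hΦm
  have hsY : (1:ℝ) ≤ Real.sqrt Y := by
    rw [show (1:ℝ) = Real.sqrt 1 by simp]
    exact Real.sqrt_le_sqrt hY
  have hsqY : 0 < Real.sqrt Y := lt_of_lt_of_le one_pos hsY
  set V : ℝ := min U (Q / Real.sqrt Y) with hVdef
  have hV : 0 < V := lt_min hU (div_pos hQ hsqY)
  have hVU : V ≤ U := min_le_left _ _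
  have hVQ : V ≤ Q / Real.sqrt Y := min_le_right _ _
  have hb1 : (0:ℝ) < Q * R / Real.sqrt Y := by positivity
  have hb2 : (0:ℝ) < R * U := by positivity
  set S : ℝ := (Q * R / Real.sqrt Y) ^ (-A) + (R * U) ^ (-A) with hSdef
  have hS0 : 0 ≤ S := by
    have := Real.rpow_nonneg hb1.le (-A)
    have := Real.rpow_nonneg hb2.le (-A)
    positivity
  have hba : (0:ℝ) ≤ β - α := by linarith
  by_cases hhard : 1 ≤ R * V
  · -- apply core
    have hwb' : ∀ j (t : ℝ), ‖iteratedDeriv j w t‖ ≤ D j * X / V ^ j := by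
      intro j t
      have h := hwb j t
      rw [zpow_neg, zpow_natCast] at h
      have h2 : Cw j * X * (U ^ j)⁻¹ ≤ D j * X * (U ^ j)⁻¹ :=
        mul_le_mul_of_nonneg_right
          (mul_le_mul_of_nonneg_right (le_max_left _ _) hX.le) (by positivity)
      have h3 : D j * X * (U ^ j)⁻¹ ≤ D j * X * (V ^ j)⁻¹ :=
        mul_le_mul_of_nonneg_left
          (inv_anti₀ (pow_pos hV j) (pow_le_pow_left₀ hV.le hVU j))
          (by have := hD j; positivity)
      calc ‖iteratedDeriv j w t‖ ≤ Cw j * X * (U ^ j)⁻¹ := h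
        _ ≤ D j * X * (V ^ j)⁻¹ := h2.trans h3
        _ = D j * X / V ^ j := by rw [div_eq_mul_inv]
    have hΦm' : ∀ m, 2 ≤ m → ∀ t ∈ Icc α β, |iteratedDeriv m Φ t| ≤ E m / V ^ m := by
      intro m hm t ht
      have h := hΦm m hm t ht
      rw [zpow_neg, zpow_natCast] at h
      have h2 : CΦ m * Y * (Q ^ m)⁻¹ ≤ E m * (Y * (Q ^ m)⁻¹) := by
        rw [mul_assoc] at *
        exact mul_le_mul_of_nonneg_right (le_max_left _ _) (by positivity)
      have hkey : Y * (Q ^ m)⁻¹ ≤ (V ^ m)⁻¹ := by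
        have hYV : Y * V ^ m ≤ Q ^ m := by
          have hVm : V ^ m ≤ (Q / Real.sqrt Y) ^ m := pow_le_pow_left₀ hV.le hVQ m
          have hQm : (Q / Real.sqrt Y) ^ m = Q ^ m / Real.sqrt Y ^ m := div_pow Q _ m
          have hYsq : Y = Real.sqrt Y ^ 2 := (Real.sq_sqrt (by linarith)).symm
          have hsq : Real.sqrt Y ^ 2 ≤ Real.sqrt Y ^ m := pow_le_pow_right₀ hsY hm
          have h4 : Y * V ^ m ≤ Y * (Q ^ m / Real.sqrt Y ^ m) :=
            mul_le_mul_of_nonneg_left (hVm.trans_eq hQm) (by linarith)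
          have h5 : Y / Real.sqrt Y ^ m ≤ 1 := by
            rw [div_le_one (by positivity)]
            calc Y = Real.sqrt Y ^ 2 := hYsq
              _ ≤ Real.sqrt Y ^ m := hsq
          calc Y * V ^ m ≤ Y * (Q ^ m / Real.sqrt Y ^ m) := h4
            _ = Q ^ m * (Y / Real.sqrt Y ^ m) := by ring
            _ ≤ Q ^ m := mul_le_of_le_one_right (le_of_lt (pow_pos hQ m)) h5
        have h6 : Y / Q ^ m ≤ 1 / V ^ m := by
          rw [div_le_div_iff₀ (pow_pos hQ m) (pow_pos hV m)]
          linarith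
        rw [div_eq_mul_inv, one_div] at h6
        exact h6
      have h3 : E m * (Y * (Q ^ m)⁻¹) ≤ E m * (V ^ m)⁻¹ :=
        mul_le_mul_of_nonneg_left hkey (hE m)
      calc |iteratedDeriv m Φ t| ≤ CΦ m * Y * (Q ^ m)⁻¹ := h
        _ ≤ E m * (V ^ m)⁻¹ := h2.trans h3
        _ = E m / V ^ m := by rw [div_eq_mul_inv]
    have happ := hC₂ α β X V R w Φ hX hV hR hhard hab hw hsupp hwb' hΦ hΦR hΦm'
    have hpow : ((R * V) ^ n)⁻¹ ≤ S := by
      have h7 : ((R * V) ^ n)⁻¹ = (R * V) ^ (-(n:ℝ)) := by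
        rw [Real.rpow_neg (by positivity), Real.rpow_natCast]
      have h6 : (R * V) ^ (-(n:ℝ)) ≤ (R * V) ^ (-A) :=
        Real.rpow_le_rpow_of_exponent_le hhard (neg_le_neg (Nat.le_ceil A))
      rw [h7]
      refine h6.trans ?_
      rcases min_cases U (Q / Real.sqrt Y) with ⟨hmin, _⟩ | ⟨hmin, _⟩
      · have hrv : R * V = R * U := by rw [hVdef, hmin]
        rw [hrv, hSdef]
        exact le_add_of_nonneg_left (Real.rpow_nonneg hb1.le _)
      · have hrv : R * V = Q * R / Real.sqrt Y := by rw [hVdef, hmin]; ring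
        rw [hrv, hSdef]
        exact le_add_of_nonneg_right (Real.rpow_nonneg hb2.le _)
    calc ‖∫ t : ℝ, w t * Complex.exp (Complex.I * (Φ t : ℂ))‖
        ≤ C₂ * (β - α) * X / (R * V) ^ n := happ
      _ = (C₂ * (β - α) * X) * ((R * V) ^ n)⁻¹ := by rw [div_eq_mul_inv]
      _ ≤ (C₂ * (β - α) * X) * S :=
          mul_le_mul_of_nonneg_left hpow (by positivity)
      _ ≤ (m0 + C₂) * (β - α) * X * S := by
          have h8 : C₂ * (β - α) * X ≤ (m0 + C₂) * (β - α) * X :=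
            mul_le_mul_of_nonneg_right
              (mul_le_mul_of_nonneg_right (by linarith) hba) hX.le
          exact mul_le_mul_of_nonneg_right h8 hS0
  · -- trivial bound
    push_neg at hhard
    have hS1 : 1 ≤ S := by
      rcases min_cases U (Q / Real.sqrt Y) with ⟨hmin, _⟩ | ⟨hmin, _⟩
      · have hrv : R * U < 1 := by rw [← hmin, ← hVdef]; exact hhard
        have h9 : 1 ≤ (R * U) ^ (-A) :=
          Real.one_le_rpow_of_pos_of_le_one_of_nonpos hb2 hrv.le (neg_nonpos.mpr hA)
        have := Real.rpow_nonneg hb1.le (-A)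
        rw [hSdef]; linarith
      · have hrv : Q * R / Real.sqrt Y < 1 := by
          have : R * V < 1 := hhard
          rw [hVdef, hmin] at this
          calc Q * R / Real.sqrt Y = R * (Q / Real.sqrt Y) := by ring
            _ < 1 := this
        have h9 : 1 ≤ (Q * R / Real.sqrt Y) ^ (-A) :=
          Real.one_le_rpow_of_pos_of_le_one_of_nonpos hb1 hrv.le (neg_nonpos.mpr hA)
        have := Real.rpow_nonneg hb2.le (-A)
        rw [hSdef]; linarith
    have h0 : ∀ t, t ∉ Icc α β → w t * Complex.exp (Complex.I * (Φ t:ℂ)) = 0 := by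
      intro t ht
      have hwt : w t = 0 := by by_contra h; exact ht (hsupp t h)
      rw [hwt, zero_mul]
    have hb : ∀ t, ‖w t * Complex.exp (Complex.I * (Φ t:ℂ))‖ ≤ m0 * X := by
      intro t
      rw [norm_mul]
      have h1 : ‖Complex.exp (Complex.I * (Φ t:ℂ))‖ = 1 := by
        rw [Complex.norm_exp]
        simp
      rw [h1, mul_one]
      have h := hwb 0 t
      simp only [iteratedDeriv_zero, zpow_neg, zpow_natCast, pow_zero, inv_one, mul_one] at h
      calc ‖w t‖ ≤ Cw 0 * X := h
        _ ≤ m0 * X := mul_le_mul_of_nonneg_right (le_max_left _ _) hX.le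
    calc ‖∫ t : ℝ, w t * Complex.exp (Complex.I * (Φ t : ℂ))‖
        ≤ (β - α) * (m0 * X) := triv_bound hab h0 hb
      _ = m0 * (β - α) * X * 1 := by ring
      _ ≤ (m0 + C₂) * (β - α) * X * S := by
          have h8 : m0 * (β - α) * X ≤ (m0 + C₂) * (β - α) * X :=
            mul_le_mul_of_nonneg_right
              (mul_le_mul_of_nonneg_right (by linarith) hba) hX.le
          calc m0 * (β - α) * X * 1 ≤ m0 * (β - α) * X * S :=
                mul_le_mul_of_nonneg_left hS1 (by positivity)
            _ ≤ (m0 + C₂) * (β - α) * X * S := mul_le_mul_of_nonneg_right h8 hS0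


end BKYproof

/-- **Integration by parts / stationary phase lemma** (Blomer–Khan–Young, Lemma 8.1).
If `w` is smooth and supported in `[α,β]` with `|w^{(j)}| ≤ C_j X U^{-j}`, and `Φ` is a
smooth real phase with `|Φ'| ≥ R` and `|Φ^{(j)}| ≤ C'_j Y Q^{-j}` for `j ≥ 2` on `[α,β]`,
where `Y ≥ 1` and `X, Q, U, R > 0`, then for every `A ≥ 0` there is a constant `C`
(depending only on `A` and the constants `C_j, C'_j`) with
`|∫ w(t) e^{iΦ(t)} dt| ≤ C (β-α) X [(QR/√Y)^{-A} + (RU)^{-A}]`. -/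
theorem stmt10 (Cw CΦ : ℕ → ℝ) (A : ℝ) (hA : 0 ≤ A) :
    ∃ C : ℝ, ∀ (α β X U R Q Y : ℝ) (w : ℝ → ℂ) (Φ : ℝ → ℝ),
      0 < X → 0 < U → 0 < R → 0 < Q → 1 ≤ Y → α ≤ β →
      ContDiff ℝ (⊤ : ℕ∞) w →
      (∀ t : ℝ, w t ≠ 0 → t ∈ Icc α β) →
      (∀ (j : ℕ) (t : ℝ), ‖iteratedDeriv j w t‖ ≤ Cw j * X * U ^ (-(j : ℤ))) →
      ContDiff ℝ (⊤ : ℕ∞) Φ →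
      (∀ t ∈ Icc α β, R ≤ |deriv Φ t|) →
      (∀ j : ℕ, 2 ≤ j → ∀ t ∈ Icc α β, |iteratedDeriv j Φ t| ≤ CΦ j * Y * Q ^ (-(j : ℤ))) →
      ‖∫ t : ℝ, w t * Complex.exp (Complex.I * (Φ t : ℂ))‖ ≤
        C * (β - α) * X * ((Q * R / Real.sqrt Y) ^ (-A) + (R * U) ^ (-A)) := by
  exact BKYproof.stmt10_aux Cw CΦ A hA
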